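/- Let P be a poset on [n], E an equivalence relation on I(P) with dual relation E*, such that the E-class of the empty ideal is a singleton ((∅,K) ∈ E implies K = ∅), 𝔽_q a finite field, and χ a nontrivial additive character of 𝔽_q. If E is a MacWilliams-type equivalence relation (for all linear P-codes C₁, C₂ ⊆ 𝔽_q^n, equality of the numbers A_{Ī,E}(C₁) = A_{Ī,E}(C₂) for all order ideals I implies A_{J̄^c,E*}(C₁^⊥) = A_{J̄^c,E*}(C₂^⊥) for all order ideals J), then for all order ideals I, J and all u, u' ∈ S_{Ī,E}: Σ_{v ∈ S_{J̄^c,E*}} χ(u·v) = Σ_{v ∈ S_{J̄^c,E*}} χ(u'·v). (Theorem 3.3, (i) ⇒ (ii)(a).) -/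

import Mathlib

open scoped BigOperators
open Finset

noncomputable section
open scoped Classical

/-- `I ⊆ [n]` is an order ideal with respect to the order relation `le`. -/
def IsIdeal {n : ℕ} (le : Fin n → Fin n → Prop) (I : Finset (Fin n)) : Prop :=
  ∀ a ∈ I, ∀ b, le b a → b ∈ I

/-- `⟨X⟩_P` : the smallest order ideal (w.r.t. `le`) containing `X`. -/
def idealCl {n : ℕ} (le : Fin n → Fin n → Prop) (X : Finset (Fin n)) : Finset (Fin n) :=
  Finset.univ.filter fun b => ∃ a ∈ X, le b a

/-- `M(A)` : the set of maximal elements of `A` with respect to `le`. -/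
def maxSet {n : ℕ} (le : Fin n → Fin n → Prop) (A : Finset (Fin n)) : Finset (Fin n) :=
  A.filter fun a => ∀ b ∈ A, le a b → b = a

/-- `E` is an equivalence relation on the set of order ideals of the poset `le`. -/
def EqvOnIdeals {n : ℕ} (le : Fin n → Fin n → Prop)
    (E : Finset (Fin n) → Finset (Fin n) → Prop) : Prop :=
  (∀ I J, E I J → IsIdeal le I ∧ IsIdeal le J) ∧
  (∀ I, IsIdeal le I → E I I) ∧
  (∀ I J, E I J → E J I) ∧
  (∀ I J K, E I J → E J K → E I K)

/-- support of a vector -/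
def supp {n : ℕ} {F : Type} [Field F] [Fintype F] (v : Fin n → F) : Finset (Fin n) :=
  Finset.univ.filter fun i => v i ≠ 0

/-- standard dot product -/
def dot {n : ℕ} {F : Type} [Field F] [Fintype F] (u v : Fin n → F) : F := ∑ i, u i * v i

/-- the sphere `S_I = {v : ⟨supp v⟩_P = I}` -/
def sph {n : ℕ} (F : Type) [Field F] [Fintype F] (le : Fin n → Fin n → Prop)
    (I : Finset (Fin n)) : Finset (Fin n → F) :=
  Finset.univ.filter fun v => idealCl le (supp v) = I

/-- the dual sphere `S_{J^c} = {v : ⟨supp v⟩_{P*} = J^c}` -/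
def sphD {n : ℕ} (F : Type) [Field F] [Fintype F] (le : Fin n → Fin n → Prop)
    (J : Finset (Fin n)) : Finset (Fin n → F) :=
  Finset.univ.filter fun v => idealCl (fun a b => le b a) (supp v) = Jᶜ

/-- the `E`-sphere `S_{Ī,E} = {v : (⟨supp v⟩_P, I) ∈ E}` -/
def sphE {n : ℕ} (F : Type) [Field F] [Fintype F] (le : Fin n → Fin n → Prop)
    (E : Finset (Fin n) → Finset (Fin n) → Prop) (I : Finset (Fin n)) :
    Finset (Fin n → F) :=
  Finset.univ.filter fun v => E (idealCl le (supp v)) I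

/-- the `E*`-sphere `S_{J̄^c,E*} = {v : ⟨supp v⟩_{P*} = K^c for some ideal K with (K,J) ∈ E}` -/
def sphED {n : ℕ} (F : Type) [Field F] [Fintype F] (le : Fin n → Fin n → Prop)
    (E : Finset (Fin n) → Finset (Fin n) → Prop) (J : Finset (Fin n)) :
    Finset (Fin n → F) :=
  Finset.univ.filter fun v =>
    ∃ K, IsIdeal le K ∧ E K J ∧ idealCl (fun a b => le b a) (supp v) = Kᶜ

/-- the dual code `C^⊥` -/
def dualCode {n : ℕ} {F : Type} [Field F] [Fintype F] (C : Submodule F (Fin n → F)) :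
    Submodule F (Fin n → F) where
  carrier := {u | ∀ v ∈ C, dot u v = 0}
  zero_mem' := by intro v hv; simp [dot]
  add_mem' := by
    intro a b ha hb v hv
    have h1 := ha v hv
    have h2 := hb v hv
    simp only [dot, Pi.add_apply] at *
    simp [add_mul, Finset.sum_add_distrib, h1, h2]
  smul_mem' := by
    intro c a ha v hv
    have h1 := ha v hv
    simp only [dot, Pi.smul_apply, smul_eq_mul] at *
    simp [mul_assoc, ← Finset.mul_sum, h1]

/-- `A_{Ī,E}(C) = |C ∩ S_{Ī,E}|` -/
def AE {n : ℕ} {F : Type} [Field F] [Fintype F] (le : Fin n → Fin n → Prop)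
    (E : Finset (Fin n) → Finset (Fin n) → Prop)
    (C : Submodule F (Fin n → F)) (I : Finset (Fin n)) : ℕ :=
  ((sphE F le E I).filter fun v => v ∈ C).card

/-- `A_{J̄^c,E*}(D) = |D ∩ S_{J̄^c,E*}|` -/
def AED {n : ℕ} {F : Type} [Field F] [Fintype F] (le : Fin n → Fin n → Prop)
    (E : Finset (Fin n) → Finset (Fin n) → Prop)
    (D : Submodule F (Fin n → F)) (J : Finset (Fin n)) : ℕ :=
  ((sphED F le E J).filter fun v => v ∈ D).card

/-- `E` is a MacWilliams-type equivalence relation (w.r.t. the field `F`). -/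
def IsMacWilliamsType {n : ℕ} (F : Type) [Field F] [Fintype F]
    (le : Fin n → Fin n → Prop) (E : Finset (Fin n) → Finset (Fin n) → Prop) : Prop :=
  ∀ C₁ C₂ : Submodule F (Fin n → F),
    (∀ I, IsIdeal le I → AE le E C₁ I = AE le E C₂ I) →
    ∀ J, IsIdeal le J → AED le E (dualCode C₁) J = AED le E (dualCode C₂) J

/-- a hierarchical poset (ordinal sum of antichains) -/
def IsHierarchical {n : ℕ} (le : Fin n → Fin n → Prop) : Prop :=
  ∃ l : Fin n → ℕ, ∀ i j, (le i j ∧ i ≠ j) ↔ l i < l j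

/-- `σ` is an automorphism of the poset `le`. -/
def IsAut {n : ℕ} (le : Fin n → Fin n → Prop) (σ : Equiv.Perm (Fin n)) : Prop :=
  ∀ x y, le x y ↔ le (σ x) (σ y)

/-- `A` and `B` are order-isomorphic with the induced orders. -/
def OrdIso {n : ℕ} (le : Fin n → Fin n → Prop) (A B : Finset (Fin n)) : Prop :=
  ∃ e : {x // x ∈ A} ≃ {x // x ∈ B}, ∀ a b : {x // x ∈ A}, le ↑a ↑b ↔ le ↑(e a) ↑(e b)


section AuxLemmas

set_option linter.unusedSectionVars false
variable {n : ℕ} {F : Type} [Field F] [Fintype F]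

lemma supp_zero : supp (0 : Fin n → F) = ∅ := by simp [supp]

lemma supp_smul {c : F} (hc : c ≠ 0) (v : Fin n → F) : supp (c • v) = supp v := by
  ext i
  simp [supp, Pi.smul_apply, smul_eq_mul, mul_eq_zero, hc]

lemma eq_zero_of_supp_empty {v : Fin n → F} (h : supp v = ∅) : v = 0 := by
  funext i
  by_contra hi
  have hi' : v i ≠ 0 := by simpa using hi
  have : i ∈ supp v := by simp [supp, hi']
  simp [h] at this

lemma idealCl_empty (le : Fin n → Fin n → Prop) :
    idealCl le (∅ : Finset (Fin n)) = ∅ := by simp [idealCl]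

lemma subset_idealCl (le : Fin n → Fin n → Prop) [IsPartialOrder (Fin n) le]
    (X : Finset (Fin n)) : X ⊆ idealCl le X := by
  intro a ha
  simp only [idealCl, Finset.mem_filter, Finset.mem_univ, true_and]
  exact ⟨a, ha, refl_of le a⟩

lemma dot_comm (u v : Fin n → F) : dot u v = dot v u := by
  simp [dot, mul_comm]

lemma dot_smul_right (c : F) (u v : Fin n → F) : dot u (c • v) = c * dot u v := by
  simp only [dot, Pi.smul_apply, smul_eq_mul, Finset.mul_sum]
  exact Finset.sum_congr rfl fun i _ => by ring

lemma smul_vec_inj {u : Fin n → F} (hu : u ≠ 0) :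
    Function.Injective (fun c : F => c • u) := by
  intro c c' h
  obtain ⟨i, hi⟩ : ∃ i, u i ≠ 0 := by
    by_contra hall
    push_neg at hall
    exact hu (funext hall)
  have h2 : c * u i = c' * u i := by simpa [Pi.smul_apply] using congrFun h i
  exact mul_right_cancel₀ hi h2

lemma mem_dualCode_iff {C : Submodule F (Fin n → F)} {w : Fin n → F} :
    w ∈ dualCode C ↔ ∀ v ∈ C, dot w v = 0 := Iff.rfl

lemma mem_dual_span {x w : Fin n → F} :
    w ∈ dualCode (Submodule.span F {x}) ↔ dot x w = 0 := by
  rw [mem_dualCode_iff]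
  constructor
  · intro h
    rw [dot_comm]
    exact h x (Submodule.mem_span_singleton_self x)
  · intro h v hv
    obtain ⟨c, rfl⟩ := Submodule.mem_span_singleton.mp hv
    rw [dot_smul_right, dot_comm, h, mul_zero]

/-- the count of elements of `span {u}` in an `E`-sphere equals the count of scalars
satisfying the sphere condition. -/
lemma AE_span_card {n : ℕ} (le : Fin n → Fin n → Prop)
    (E : Finset (Fin n) → Finset (Fin n) → Prop)
    {u : Fin n → F} (hu : u ≠ 0) (I' : Finset (Fin n)) :
    AE le E (Submodule.span F {u}) I' =
      (Finset.univ.filter fun c : F => E (idealCl le (supp (c • u))) I').card := by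
  unfold AE
  rw [show (sphE F le E I').filter (fun v => v ∈ Submodule.span F {u}) =
      (Finset.univ.filter fun c : F => E (idealCl le (supp (c • u))) I').image
        (fun c => c • u) from ?_]
  · exact Finset.card_image_of_injective _ (smul_vec_inj hu)
  · ext v
    simp only [sphE, Finset.mem_filter, Finset.mem_univ, true_and, Finset.mem_image]
    constructor
    · rintro ⟨hv, hmem⟩
      obtain ⟨c, rfl⟩ := Submodule.mem_span_singleton.mp hmem
      exact ⟨c, hv, rfl⟩
    · rintro ⟨c, hc, rfl⟩
      exact ⟨hc, Submodule.mem_span_singleton.mpr ⟨c, rfl⟩⟩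

end AuxLemmas

/-- Theorem 3.3, (i) ⇒ (ii)(a): if `E` is of MacWilliams type then the character sums over
`S_{J̄^c,E*}` are constant on each `E`-sphere. -/
theorem stmt_5 {n : ℕ} (hn : 0 < n) (le : Fin n → Fin n → Prop)
    [IsPartialOrder (Fin n) le]
    (E : Finset (Fin n) → Finset (Fin n) → Prop) (hE : EqvOnIdeals le E)
    (hsing : ∀ K, E ∅ K → K = ∅)
    (F : Type) [Field F] [Fintype F] (χ : AddChar F ℂ) (hχ : ∃ a, χ a ≠ 1)
    (hMW : IsMacWilliamsType F le E) :
    ∀ I J : Finset (Fin n), IsIdeal le I → IsIdeal le J →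
      ∀ u ∈ sphE F le E I, ∀ u' ∈ sphE F le E I,
        ∑ v ∈ sphED F le E J, χ (dot u v) = ∑ v ∈ sphED F le E J, χ (dot u' v) := by
  intro I J hI hJ u hu u' hu'
  obtain ⟨hmem, hrefl, hsymm, htrans⟩ := hE
  simp only [sphE, Finset.mem_filter, Finset.mem_univ, true_and] at hu hu'
  have hzz : ∀ w : Fin n → F, E (idealCl le (supp w)) I → I = ∅ → w = 0 := by
    intro w hw hIe
    subst hIe
    have h1 := hsing _ (hsymm _ _ hw)
    have h2 : supp w = ∅ := Finset.subset_empty.mp (h1 ▸ subset_idealCl le (supp w))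
    exact eq_zero_of_supp_empty h2
  by_cases h0 : u = 0
  · have hIe : I = ∅ := by
      have hcl : idealCl le (supp u) = ∅ := by rw [h0, supp_zero, idealCl_empty]
      exact hsing I (hcl ▸ hu)
    rw [h0, hzz u' hu' hIe]
  · have h0' : u' ≠ 0 := by
      intro h
      apply h0
      apply hzz u hu
      have hcl : idealCl le (supp u') = ∅ := by rw [h, supp_zero, idealCl_empty]
      exact hsing I (hcl ▸ hu')
    -- Step 1: the spans of u and u' have the same E-sphere counts.
    have hAEcond : ∀ (c : F) (I' : Finset (Fin n)),
        E (idealCl le (supp (c • u))) I' ↔ E (idealCl le (supp (c • u'))) I' := by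
      intro c I'
      by_cases hc : c = 0
      · subst hc; simp only [zero_smul]
      · rw [supp_smul hc, supp_smul hc]
        constructor
        · intro h; exact htrans _ _ _ hu' (htrans _ _ _ (hsymm _ _ hu) h)
        · intro h; exact htrans _ _ _ hu (htrans _ _ _ (hsymm _ _ hu') h)
    have hAE : ∀ I', IsIdeal le I' →
        AE le E (Submodule.span F {u}) I' = AE le E (Submodule.span F {u'}) I' := by
      intro I' _
      rw [AE_span_card le E h0, AE_span_card le E h0']
      congr 1
      apply Finset.filter_congr
      intro c _
      exact hAEcond c I'
    -- Step 2: MacWilliams gives equal dual counts.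
    have hAED := hMW _ _ hAE J hJ
    -- Step 3: character sums.
    set S := sphED F le E J with hSdef
    have hχ1 : χ ≠ 1 := AddChar.ne_one_iff.mpr hχ
    have hprim : χ.IsPrimitive := AddChar.IsPrimitive.of_ne_one hχ1
    have key : ∀ x : Fin n → F,
        (Fintype.card F : ℂ) * (AED le E (dualCode (Submodule.span F {x})) J : ℂ)
        = (S.card : ℂ) + ((Fintype.card F : ℂ) - 1) * ∑ v ∈ S, χ (dot x v) := by
      intro x
      have h1 : ∑ c : F, ∑ v ∈ S, χ (c * dot x v)
          = (Fintype.card F : ℂ) * (AED le E (dualCode (Submodule.span F {x})) J : ℂ) := by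
        rw [Finset.sum_comm]
        have hterm : ∀ v ∈ S, ∑ c : F, χ (c * dot x v)
            = if dot x v = 0 then (Fintype.card F : ℂ) else 0 := by
          intro v _
          rw [AddChar.sum_mulShift _ hprim]
          split_ifs <;> simp
        rw [Finset.sum_congr rfl hterm, ← Finset.sum_filter]
        have hfe : S.filter (fun v => dot x v = 0)
            = S.filter (fun v => v ∈ dualCode (Submodule.span F {x})) := by
          apply Finset.filter_congr
          intro v _
          exact mem_dual_span.symm
        rw [hfe, Finset.sum_const]
        unfold AED
        rw [hSdef]
        push_cast
        ring
      have h2 : ∑ c : F, ∑ v ∈ S, χ (c * dot x v)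
          = (S.card : ℂ) + ((Fintype.card F : ℂ) - 1) * ∑ v ∈ S, χ (dot x v) := by
        rw [← Finset.sum_erase_add _ _ (Finset.mem_univ (0 : F))]
        have hz : ∑ v ∈ S, χ ((0 : F) * dot x v) = (S.card : ℂ) := by
          simp [zero_mul]
        have hcne : ∀ c ∈ Finset.univ.erase (0 : F),
            ∑ v ∈ S, χ (c * dot x v) = ∑ v ∈ S, χ (dot x v) := by
          intro c hc
          have hc0 : c ≠ 0 := Finset.ne_of_mem_erase hc
          have hrw : ∑ v ∈ S, χ (c * dot x v) = ∑ v ∈ S, χ (dot x (c • v)) :=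
            Finset.sum_congr rfl fun v _ => by rw [dot_smul_right]
          rw [hrw]
          have hmemS : ∀ (d : F), d ≠ 0 → ∀ v ∈ S, d • v ∈ S := by
            intro d hd v hv
            simp only [hSdef, sphED, Finset.mem_filter, Finset.mem_univ, true_and]
              at hv ⊢
            rwa [supp_smul hd]
          refine Finset.sum_nbij' (fun v => c • v) (fun v => c⁻¹ • v)
            (fun v hv => hmemS c hc0 v hv)
            (fun v hv => hmemS c⁻¹ (inv_ne_zero hc0) v hv) ?_ ?_ ?_
          · intro v _; simp [smul_smul, inv_mul_cancel₀ hc0]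
          · intro v _; simp [smul_smul, mul_inv_cancel₀ hc0]
          · intro v _; rfl
        rw [Finset.sum_congr rfl hcne, hz, Finset.sum_const]
        have hcard : (Finset.univ.erase (0 : F)).card = Fintype.card F - 1 := by
          rw [Finset.card_erase_of_mem (Finset.mem_univ _), Finset.card_univ]
        rw [hcard]
        have h1le : 1 ≤ Fintype.card F := Fintype.card_pos
        rw [nsmul_eq_mul, Nat.cast_sub h1le]
        push_cast
        ring
      exact h1.symm.trans h2
    have e1 := key u
    have e2 := key u'
    rw [hAED] at e1
    have heq := e1.symm.trans e2
    have hq1 : ((Fintype.card F : ℂ) - 1) ≠ 0 := by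
      have h2 : Fintype.card F ≠ 1 := Nat.ne_of_gt Fintype.one_lt_card
      have h3 : (Fintype.card F : ℂ) ≠ 1 := by exact_mod_cast h2
      exact sub_ne_zero.mpr h3
    exact mul_left_cancel₀ hq1 (add_left_cancel heq)

end
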